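/- (Newton–Maclaurin inequality) Let $\lambda \in \Gamma_k \subset \mathbb{R}^{n-1}$, i.e., $\sigma_i(\lambda) > 0$ for all $1 \le i \le k$. Then for all $1 \le l \le k \le n-1$, $\left(\frac{\sigma_k(\lambda)}{\binom{n-1}{k}}\right)^{1/k} \le \left(\frac{\sigma_l(\lambda)}{\binom{n-1}{l}}\right)^{1/l}$. -/

import Mathlib

open Finset

/-- The `k`-th elementary symmetric polynomial of `λ = (λ_1, …, λ_{n-1})`. -/
noncomputable def esymmFun {m : ℕ} (k : ℕ) (lam : Fin m → ℝ) : ℝ :=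
  ∑ A ∈ Finset.powersetCard k (Finset.univ : Finset (Fin m)), ∏ j ∈ A, lam j

/-- The `k`-th elementary symmetric polynomial of the variables with `λ_i` omitted,
denoted `σ_k(λ|i)`. -/
noncomputable def esymmFunErase {m : ℕ} (k : ℕ) (lam : Fin m → ℝ) (i : Fin m) : ℝ :=
  ∑ A ∈ Finset.powersetCard k ((Finset.univ : Finset (Fin m)).erase i), ∏ j ∈ A, lam j

open Polynomial
def RR (p : ℝ[X]) : Prop := p.natDegree ≤ Multiset.card p.roots

lemma reverse_multiset_prod (s : Multiset ℝ[X]) :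
    s.prod.reverse = (s.map Polynomial.reverse).prod := by
  induction s using Multiset.induction with
  | empty => simpa using Polynomial.reverse_C (1:ℝ)
  | cons a s ih => simp [Polynomial.reverse_mul_of_domain, ih]

lemma reverse_X_sub_C (r : ℝ) : (X - C r).reverse = 1 - C r * X := by
  have h : (X - C r).natDegree = 1 := natDegree_X_sub_C r
  unfold Polynomial.reverse
  rw [h]
  ext n
  rcases n with _ | _ | n <;> simp [coeff_reflect]

lemma one_sub_C_mul_X_ne_zero (r : ℝ) : (1 - C r * X : ℝ[X]) ≠ 0 := fun h => by
  have := congrArg (fun p => Polynomial.coeff p 0) h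
  simp at this

lemma key1 (r : ℝ) : ((1 : ℝ[X]) - C r * X).natDegree ≤
    Multiset.card ((1 - C r * X : ℝ[X]).roots) := by
  rcases eq_or_ne r 0 with rfl | hr
  · simp
  · have e : (1 - C r * X : ℝ[X]) = C (-r) * (X - C r⁻¹) := by
      rw [mul_sub, ← C_mul, neg_mul, mul_inv_cancel₀ hr]
      push_cast [map_neg, map_one]
      ring
    rw [e, roots_C_mul _ (neg_ne_zero.mpr hr), roots_X_sub_C,
      natDegree_C_mul (neg_ne_zero.mpr hr), natDegree_X_sub_C]
    simp

lemma RR_reverse {p : ℝ[X]} (h : RR p) : RR p.reverse := by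
  rcases eq_or_ne p 0 with rfl | hp
  · simp [RR]
  have hcard : Multiset.card p.roots = p.natDegree := le_antisymm p.card_roots' h
  have hfact := Polynomial.C_leadingCoeff_mul_prod_multiset_X_sub_C hcard
  have ha : p.leadingCoeff ≠ 0 := leadingCoeff_ne_zero.mpr hp
  have hrev : p.reverse = C p.leadingCoeff * ((p.roots.map fun r => 1 - C r * X).prod) := by
    conv_lhs => rw [← hfact]
    rw [Polynomial.reverse_mul_of_domain, reverse_multiset_prod, Multiset.map_map]
    congr 1
    · exact Polynomial.reverse_C _
    · congr 1; ext r; simp [reverse_X_sub_C]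
  have hz : (0 : ℝ[X]) ∉ p.roots.map fun r => (1 : ℝ[X]) - C r * X := by
    simp only [Multiset.mem_map]
    rintro ⟨r, -, hr⟩
    exact one_sub_C_mul_X_ne_zero r hr
  unfold RR
  rw [hrev, roots_C_mul _ ha, natDegree_C_mul ha,
    Polynomial.roots_multiset_prod _ hz, Multiset.card_bind]
  calc (Multiset.map (fun r => (1:ℝ[X]) - C r * X) p.roots).prod.natDegree
      ≤ ((p.roots.map fun r => (1:ℝ[X]) - C r * X).map natDegree).sum :=
        Polynomial.natDegree_multiset_prod_le _
    _ ≤ _ := by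
        rw [Multiset.map_map, Multiset.map_map]
        exact Multiset.sum_map_le_sum_map _ _ fun r _ => key1 r

lemma quad_disc {p : ℝ[X]} (h2 : p.natDegree ≤ 2) (h : RR p) :
    4 * (p.coeff 2 * p.coeff 0) ≤ (p.coeff 1) ^ 2 := by
  rcases Nat.lt_or_ge p.natDegree 2 with hd | hd
  · rw [Polynomial.coeff_eq_zero_of_natDegree_lt hd]
    nlinarith [sq_nonneg (p.coeff 1)]
  have hdeg : p.natDegree = 2 := le_antisymm h2 hd
  have hp : p ≠ 0 := fun h0 => by simp [h0] at hdeg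
  have hcard : Multiset.card p.roots = 2 := by
    have := p.card_roots'
    unfold RR at h; omega
  obtain ⟨r, s, hrs⟩ := Multiset.card_eq_two.mp hcard
  have hfact := Polynomial.C_leadingCoeff_mul_prod_multiset_X_sub_C (p := p) (by omega)
  rw [hrs] at hfact
  set a := p.leadingCoeff with ha
  have hfact2 : p = C a * X^2 - C (a*(r+s)) * X + C (a*(r*s)) := by
    rw [← hfact]
    simp only [Multiset.insert_eq_cons, Multiset.map_cons, Multiset.map_singleton,
      Multiset.prod_cons, Multiset.prod_singleton, C_mul, C_add]
    ring
  have e0 : p.coeff 0 = a * (r * s) := by rw [hfact2]; simp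
  have e1 : p.coeff 1 = -(a * (r + s)) := by rw [hfact2]; simp
  have e2 : p.coeff 2 = a := by rw [hfact2]; simp
  rw [e0, e1, e2]; nlinarith [sq_nonneg (a * (r - s))]

lemma descA1 (a : ℕ) : (a+1).descFactorial a = (a+1) * a.factorial := by
  induction a with
  | zero => simp
  | succ a ih =>
      rw [Nat.succ_descFactorial_succ, ih, Nat.factorial_succ]

lemma descA2 (a : ℕ) : 2 * ((a+2).descFactorial a) = (a+2) * (a+1) * a.factorial := by
  induction a with
  | zero => simp
  | succ a ih =>
      rw [show a+1+2 = (a+2)+1 by ring, Nat.succ_descFactorial_succ, Nat.factorial_succ]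
      rw [show 2*((a+2+1) * (a+2).descFactorial a) = (a+3) * (2 * ((a+2).descFactorial a)) by ring, ih]
      ring

lemma desc_id (a b : ℕ) :
    4 * (((a+2).descFactorial a * b.descFactorial b) * (a.descFactorial a * (b+2).descFactorial b))
        * ((a+1)*(b+1)) =
      ((a+1).descFactorial a * (b+1).descFactorial b)^2 * ((a+2)*(b+2)) := by
  rw [show 4 * (((a+2).descFactorial a * b.descFactorial b) * (a.descFactorial a * (b+2).descFactorial b)) * ((a+1)*(b+1)) = (2 * ((a+2).descFactorial a)) * (2 * ((b+2).descFactorial b)) * (b.descFactorial b * a.descFactorial a * ((a+1)*(b+1))) by ring,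
    descA2, descA2, descA1, descA1, Nat.descFactorial_self, Nat.descFactorial_self]
  ring

lemma esymmFun_zero {m : ℕ} (lam : Fin m → ℝ) : esymmFun 0 lam = 1 := by
  simp [esymmFun]

open Finset in
lemma coeff_prodXC {m : ℕ} (lam : Fin m → ℝ) {t : ℕ} (ht : t ≤ m) :
    (∏ i ∈ univ, (X + C (lam i))).coeff t = esymmFun (m - t) lam := by
  rw [Finset.prod_X_add_C_coeff univ lam (by simpa using ht)]
  simp [esymmFun]

open Finset in
lemma RR_prodXC {m : ℕ} (lam : Fin m → ℝ) : RR (∏ i ∈ univ, (X + C (lam i))) := by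
  have hf : (∏ i ∈ univ, (X + C (lam i))) =
      ((univ.val.map fun i => -lam i).map fun r => X - C r).prod := by
    rw [Multiset.map_map]
    simp [Finset.prod]
  unfold RR
  rw [hf, Polynomial.roots_multiset_prod_X_sub_C]
  simp only [Multiset.card_map]
  have : ((univ.val.map fun i : Fin m => -lam i).map fun r => X - C r).prod.natDegree ≤
      (((univ.val.map fun i : Fin m => -lam i).map fun r => X - C r).map
        Polynomial.natDegree).sum := Polynomial.natDegree_multiset_prod_le _
  refine this.trans ?_
  rw [Multiset.map_map, Multiset.map_map]
  simp [natDegree_X_sub_C, Finset.card_univ]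

lemma RR_derivative {p : Polynomial ℝ} (h : RR p) : RR (Polynomial.derivative p) := by
  rcases eq_or_ne p 0 with rfl | hp
  · simp [RR]
  have h1 := p.natDegree_derivative_le
  have h2 := p.card_roots_le_derivative
  have h3 := (Polynomial.derivative p).card_roots'
  unfold RR at *
  omega

lemma RR_iterate_derivative {p : Polynomial ℝ} (h : RR p) (d : ℕ) :
    RR (Polynomial.derivative^[d] p) := by
  induction d with
  | zero => exact h
  | succ d ih => rw [Function.iterate_succ_apply']; exact RR_derivative ih

lemma descFactorial_pos' {n k : ℕ} (h : k ≤ n) : 0 < n.descFactorial k := by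
  rw [Nat.descFactorial_eq_factorial_mul_choose]
  exact Nat.mul_pos (Nat.factorial_pos k) (Nat.choose_pos h)

open Finset in
lemma newton_core (a b : ℕ) (lam : Fin (a+b+2) → ℝ) :
    ((a+2)*(b+2) : ℝ) * (esymmFun a lam * esymmFun (a+2) lam) ≤
      ((a+1)*(b+1) : ℝ) * (esymmFun (a+1) lam)^2 := by
  set f : Polynomial ℝ := ∏ i ∈ univ, (Polynomial.X + Polynomial.C (lam i)) with hf
  have hRRf : RR f := RR_prodXC lam
  have hcf : ∀ t, t ≤ a+b+2 → f.coeff t = esymmFun (a+b+2 - t) lam :=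
    fun t ht => coeff_prodXC lam ht
  have hdegf : f.natDegree ≤ a+b+2 := by
    refine (Polynomial.natDegree_prod_le _ _).trans ?_
    simp
  set g : Polynomial ℝ := Polynomial.derivative^[b] f with hg
  have hRRg : RR g := RR_iterate_derivative hRRf b
  have hgc : ∀ t, g.coeff t = ((t+b).descFactorial b : ℝ) * f.coeff (t+b) := by
    intro t
    rw [hg, Polynomial.coeff_iterate_derivative, nsmul_eq_mul]
  have hdegg : g.natDegree = a + 2 := by
    refine le_antisymm ?_ ?_
    · have h := Polynomial.natDegree_iterate_derivative f b
      rw [← hg] at h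
      omega
    · refine Polynomial.le_natDegree_of_ne_zero ?_
      rw [hgc]
      have h1 : f.coeff (a+2+b) = 1 := by
        rw [hcf _ (by omega), show a+b+2 - (a+2+b) = 0 by omega, esymmFun_zero]
      rw [h1, mul_one]
      exact_mod_cast (descFactorial_pos' (by omega)).ne'
  set G : Polynomial ℝ := g.reverse with hG
  have hRRG : RR G := RR_reverse hRRg
  have hGc : ∀ s, s ≤ a + 2 → G.coeff s = g.coeff (a + 2 - s) := by
    intro s hs
    rw [hG, Polynomial.coeff_reverse, hdegg, Polynomial.revAt_le hs]
  have hdegG : G.natDegree ≤ a + 2 := by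
    rw [hG, ← hdegg]; exact Polynomial.reverse_natDegree_le g
  set p : Polynomial ℝ := Polynomial.derivative^[a] G with hp
  have hRRp : RR p := RR_iterate_derivative hRRG a
  have hdegp : p.natDegree ≤ 2 := by
    have h := Polynomial.natDegree_iterate_derivative G a
    rw [← hp] at h
    omega
  have hpc : ∀ t, p.coeff t = ((t+a).descFactorial a : ℝ) * G.coeff (t+a) := by
    intro t
    rw [hp, Polynomial.coeff_iterate_derivative, nsmul_eq_mul]
  have e0 : p.coeff 0 = (a.descFactorial a : ℝ) * ((b+2).descFactorial b : ℝ) *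
      esymmFun a lam := by
    rw [hpc, show (0:ℕ)+a = a by omega, hGc _ (by omega), show a + 2 - a = 2 by omega, hgc,
      show (2:ℕ)+b = b+2 by omega, hcf _ (by omega), show a+b+2 - (b+2) = a by omega]
    ring
  have e1 : p.coeff 1 = ((a+1).descFactorial a : ℝ) * ((b+1).descFactorial b : ℝ) *
      esymmFun (a+1) lam := by
    rw [hpc, show (1:ℕ)+a = a+1 by omega, hGc _ (by omega), show a + 2 - (a+1) = 1 by omega,
      hgc, show (1:ℕ)+b = b+1 by omega, hcf _ (by omega),
      show a+b+2 - (b+1) = a+1 by omega]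
    ring
  have e2 : p.coeff 2 = ((a+2).descFactorial a : ℝ) * (b.descFactorial b : ℝ) *
      esymmFun (a+2) lam := by
    rw [hpc, show (2:ℕ)+a = a+2 by omega, hGc _ (by omega), show a + 2 - (a+2) = 0 by omega,
      hgc, show (0:ℕ)+b = b by omega, hcf _ (by omega), show a+b+2 - b = a+2 by omega]
    ring
  have hq := quad_disc hdegp hRRp
  rw [e0, e1, e2] at hq
  have hid : (4:ℝ) * (((a+2).descFactorial a * b.descFactorial b : ℕ) *
      ((a.descFactorial a * (b+2).descFactorial b : ℕ))) * ((a+1)*(b+1)) =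
      (((a+1).descFactorial a * (b+1).descFactorial b : ℕ) : ℝ)^2 * ((a+2)*(b+2)) := by
    exact_mod_cast congrArg (Nat.cast : ℕ → ℝ) (desc_id a b)
  push_cast at hid
  have hK1pos : (0:ℝ) < ((a+1).descFactorial a : ℝ) * ((b+1).descFactorial b : ℝ) := by
    have h1 := descFactorial_pos' (show a ≤ a+1 by omega)
    have h2 := descFactorial_pos' (show b ≤ b+1 by omega)
    positivity
  set K1 : ℝ := ((a+1).descFactorial a : ℝ) * ((b+1).descFactorial b : ℝ) with hK1
  have step : K1^2 * (((a+2)*(b+2) : ℝ) * (esymmFun a lam * esymmFun (a+2) lam)) ≤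
      K1^2 * (((a+1)*(b+1) : ℝ) * (esymmFun (a+1) lam)^2) := by
    calc K1^2 * (((a+2)*(b+2) : ℝ) * (esymmFun a lam * esymmFun (a+2) lam))
        = ((a+1:ℝ)*(b+1)) * (4 * (((a+2).descFactorial a : ℝ) * (b.descFactorial b : ℝ) *
            esymmFun (a+2) lam * ((a.descFactorial a : ℝ) * ((b+2).descFactorial b : ℝ) *
            esymmFun a lam))) := by
          rw [hK1]
          linear_combination (-(esymmFun a lam * esymmFun (a+2) lam)) * hid
      _ ≤ ((a+1:ℝ)*(b+1)) * ((((a+1).descFactorial a : ℝ) * ((b+1).descFactorial b : ℝ) *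
            esymmFun (a+1) lam)^2) := by
          refine mul_le_mul_of_nonneg_left ?_ (by positivity)
          exact hq
      _ = K1^2 * (((a+1)*(b+1) : ℝ) * (esymmFun (a+1) lam)^2) := by
          rw [hK1]; ring
  exact le_of_mul_le_mul_left step (by positivity)

lemma newton_norm (a b : ℕ) (lam : Fin (a+b+2) → ℝ) :
    (esymmFun a lam / ((a+b+2).choose a : ℝ)) *
      (esymmFun (a+2) lam / ((a+b+2).choose (a+2) : ℝ)) ≤
      (esymmFun (a+1) lam / ((a+b+2).choose (a+1) : ℝ))^2 := by
  have hc0 : 0 < ((a+b+2).choose a : ℝ) := by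
    exact_mod_cast Nat.choose_pos (by omega)
  have hc1 : 0 < ((a+b+2).choose (a+1) : ℝ) := by
    exact_mod_cast Nat.choose_pos (by omega)
  have hc2 : 0 < ((a+b+2).choose (a+2) : ℝ) := by
    exact_mod_cast Nat.choose_pos (by omega)
  have h1 : ((a+b+2).choose (a+1) * (a+1) : ℝ) = ((a+b+2).choose a : ℝ) * (b+2) := by
    have := Nat.choose_succ_right_eq (a+b+2) a
    rw [show a+b+2 - a = b+2 by omega] at this
    exact_mod_cast congrArg (Nat.cast : ℕ → ℝ) this
  have h2 : ((a+b+2).choose (a+2) * (a+2) : ℝ) = ((a+b+2).choose (a+1) : ℝ) * (b+1) := by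
    have := Nat.choose_succ_right_eq (a+b+2) (a+1)
    rw [show a+b+2 - (a+1) = b+1 by omega] at this
    exact_mod_cast congrArg (Nat.cast : ℕ → ℝ) this
  have hcc : ((a+2)*(b+2):ℝ) * (((a+b+2).choose a : ℝ) * ((a+b+2).choose (a+2) : ℝ)) =
      ((a+1)*(b+1):ℝ) * ((a+b+2).choose (a+1) : ℝ)^2 := by
    linear_combination ((b:ℝ)+2) * ((a+b+2).choose a : ℝ) * h2 -
      ((b:ℝ)+1) * ((a+b+2).choose (a+1) : ℝ) * h1
  rw [div_mul_div_comm, div_pow, div_le_div_iff₀ (by positivity) (by positivity)]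
  have h := newton_core a b lam
  have big : ((a+1)*(b+1):ℝ) *
      ((esymmFun a lam * esymmFun (a+2) lam) * ((a+b+2).choose (a+1) : ℝ)^2) ≤
      ((a+1)*(b+1):ℝ) * ((esymmFun (a+1) lam)^2 *
        (((a+b+2).choose a : ℝ) * ((a+b+2).choose (a+2) : ℝ))) := by
    calc ((a+1)*(b+1):ℝ) *
        ((esymmFun a lam * esymmFun (a+2) lam) * ((a+b+2).choose (a+1) : ℝ)^2)
        = (((a+b+2).choose a : ℝ) * ((a+b+2).choose (a+2) : ℝ)) *
            (((a+2)*(b+2):ℝ) * (esymmFun a lam * esymmFun (a+2) lam)) := by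
          linear_combination (-(esymmFun a lam * esymmFun (a+2) lam)) * hcc
      _ ≤ (((a+b+2).choose a : ℝ) * ((a+b+2).choose (a+2) : ℝ)) *
            (((a+1)*(b+1):ℝ) * (esymmFun (a+1) lam)^2) :=
          mul_le_mul_of_nonneg_left h (by positivity)
      _ = ((a+1)*(b+1):ℝ) * ((esymmFun (a+1) lam)^2 *
            (((a+b+2).choose a : ℝ) * ((a+b+2).choose (a+2) : ℝ))) := by ring
  exact le_of_mul_le_mul_left big (by positivity)

lemma newton_norm' (m : ℕ) (lam : Fin m → ℝ) (j : ℕ) (hj : 1 ≤ j) (hjm : j+1 ≤ m) :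
    (esymmFun (j-1) lam / (m.choose (j-1) : ℝ)) *
      (esymmFun (j+1) lam / (m.choose (j+1) : ℝ)) ≤
      (esymmFun j lam / (m.choose j : ℝ))^2 := by
  obtain ⟨a, rfl⟩ : ∃ a, j = a+1 := ⟨j-1, by omega⟩
  obtain ⟨b, rfl⟩ : ∃ b, m = a+b+2 := ⟨m-(a+2), by omega⟩
  simpa using newton_norm a b lam

lemma Qpos (m k : ℕ) (hk : k ≤ m) (lam : Fin m → ℝ)
    (hE : ∀ i, 1 ≤ i → i ≤ k → 0 < esymmFun i lam) :
    ∀ i, i ≤ k → 0 < esymmFun i lam / (m.choose i : ℝ) := by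
  intro i hi
  have hc : 0 < (m.choose i : ℝ) := by exact_mod_cast Nat.choose_pos (hi.trans hk)
  rcases Nat.eq_zero_or_pos i with rfl | hpos
  · rw [esymmFun_zero]; positivity
  · exact div_pos (hE i hpos hi) hc

lemma mac_chain (m k : ℕ) (hk : k ≤ m) (lam : Fin m → ℝ)
    (hE : ∀ i, 1 ≤ i → i ≤ k → 0 < esymmFun i lam) :
    ∀ j, 1 ≤ j → j + 1 ≤ k →
      (esymmFun (j+1) lam / (m.choose (j+1):ℝ))^j ≤
        (esymmFun j lam / (m.choose j : ℝ))^(j+1) := by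
  intro j
  induction j with
  | zero => omega
  | succ t ih =>
    intro _ hjk
    have hQ := Qpos m k hk lam hE
    rcases Nat.eq_zero_or_pos t with rfl | ht
    · -- base case j = 1 : Q 2 ≤ Q 1 ^ 2
      have N := newton_norm' m lam 1 le_rfl (by omega)
      simp only [show (1:ℕ) - 1 = 0 from rfl, esymmFun_zero, Nat.choose_zero_right,
        Nat.cast_one, div_one, one_mul] at N
      simpa using N
    · -- step
      have IH := ih ht (by omega)
      have N := newton_norm' m lam (t+1) (by omega) (by omega)
      rw [show t + 1 - 1 = t from rfl] at N
      set Q0 := esymmFun t lam / (m.choose t : ℝ) with hQ0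
      set Q1 := esymmFun (t+1) lam / (m.choose (t+1) : ℝ) with hQ1
      set Q2 := esymmFun (t+1+1) lam / (m.choose (t+1+1) : ℝ) with hQ2
      have p0 : 0 < Q0 := hQ t (by omega)
      have p1 : 0 < Q1 := hQ (t+1) (by omega)
      have p2 : 0 < Q2 := hQ (t+2) (by omega)
      -- N : Q0 * Q2 ≤ Q1^2 ; IH : Q1^t ≤ Q0^(t+1)
      -- want : Q2^(t+1) ≤ Q1^(t+2)
      have h1 : (Q0 * Q2)^(t+1) ≤ (Q1^2)^(t+1) :=
        pow_le_pow_left₀ (by positivity) N (t+1)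
      rw [mul_pow, ← pow_mul] at h1
      have h2 : Q1^t * Q2^(t+1) ≤ Q0^(t+1) * Q2^(t+1) :=
        mul_le_mul_of_nonneg_right IH (by positivity)
      have h3 : Q1^t * Q2^(t+1) ≤ Q1^(2*(t+1)) := h2.trans h1
      rw [show Q1^(2*(t+1)) = Q1^t * Q1^(t+1+1) by ring] at h3
      exact le_of_mul_le_mul_left h3 (by positivity)

lemma rpow_step (m k : ℕ) (hk : k ≤ m) (lam : Fin m → ℝ)
    (hE : ∀ i, 1 ≤ i → i ≤ k → 0 < esymmFun i lam)
    (j : ℕ) (hj : 1 ≤ j) (hjk : j + 1 ≤ k) :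
    (esymmFun (j+1) lam / (m.choose (j+1):ℝ)) ^ ((1:ℝ)/(j+1)) ≤
      (esymmFun j lam / (m.choose j : ℝ)) ^ ((1:ℝ)/j) := by
  have hQ := Qpos m k hk lam hE
  have p1 : 0 < esymmFun j lam / (m.choose j : ℝ) := hQ j (by omega)
  have p2 : 0 < esymmFun (j+1) lam / (m.choose (j+1) : ℝ) := hQ (j+1) hjk
  have h := mac_chain m k hk lam hE j hj hjk
  have hj0 : (j:ℝ) ≠ 0 := by positivity
  have key := Real.rpow_le_rpow (by positivity)
    (show ((esymmFun (j+1) lam / (m.choose (j+1):ℝ)) ^ j : ℝ) ≤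
      (esymmFun j lam / (m.choose j : ℝ)) ^ (j+1) from h)
    (show (0:ℝ) ≤ 1/(j*(j+1)) by positivity)
  rw [← Real.rpow_natCast (esymmFun (j+1) lam / (m.choose (j+1):ℝ)) j,
    ← Real.rpow_natCast (esymmFun j lam / (m.choose j : ℝ)) (j+1),
    ← Real.rpow_mul p2.le, ← Real.rpow_mul p1.le] at key
  rw [show (j:ℝ) * (1/(j*(j+1))) = 1/(j+1) by field_simp,
    show ((j+1:ℕ):ℝ) * (1/(j*(j+1))) = 1/j by push_cast; field_simp] at key
  exact key

theorem newton_maclaurin {n : ℕ} (k l : ℕ) (hl : 1 ≤ l) (hlk : l ≤ k) (hk : k ≤ n - 1)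
    (lam : Fin (n - 1) → ℝ)
    (hGamma : ∀ i : ℕ, 1 ≤ i → i ≤ k → 0 < esymmFun i lam) :
    (esymmFun k lam / ((n - 1).choose k : ℝ)) ^ ((1 : ℝ) / k) ≤
      (esymmFun l lam / ((n - 1).choose l : ℝ)) ^ ((1 : ℝ) / l) := by
  have main : ∀ d, l + d ≤ k →
      (esymmFun (l+d) lam / ((n-1).choose (l+d) : ℝ)) ^ ((1:ℝ)/(l+d)) ≤
        (esymmFun l lam / ((n-1).choose l : ℝ)) ^ ((1:ℝ)/l) := by
    intro d
    induction d with
    | zero => intro _; simp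
    | succ d ih =>
      intro hdk
      have step := rpow_step (n-1) k hk lam hGamma (l+d) (by omega) (by omega)
      rw [show l+(d+1) = (l+d)+1 by omega]
      refine le_trans ?_ (ih (by omega))
      convert step using 2
      · rfl
      all_goals push_cast; ring
  have h := main (k - l) (by omega)
  rw [show l + (k-l) = k by omega] at h
  convert h using 2
  rw [← Nat.cast_add, show l + (k-l) = k by omega]
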